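/- arXiv:2411.09682 — 2 statements merged into one kernel-verified Lean document; each statement's English description precedes it below -/
import Mathlib

section
/- Let μ = (μ_1,…,μ_{n+3}) be rational numbers in (0,1) with Σμ_i = 2 and α_i = exp(-2π√-1 μ_i). Consider the (n+1)×(n+1) skew-Hermitian matrix H over ℚ(ζ_d) (d the common denominator) with diagonal entries H_{ii} = (1-α_iα_{i+1})/((1-α_i)(1-α_{i+1})), super-diagonal entries H_{i,i+1} = 1/(α_{i+1}-1), sub-diagonal entries H_{i+1,i} = -conj(1/(α_{i+1}-1)), and all other entries zero. Then det H = u / Π_{i=1}^{n+3}(1-α_i) for some u ∈ N_{K/F}(K^×), where K = ℚ(ζ_d) and F = K ∩ ℝ. -/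
open Matrix

noncomputable def triMat (f u l : ℕ → ℂ) (n : ℕ) : Matrix (Fin n) (Fin n) ℂ :=
  Matrix.of fun i j =>
    if (i : ℕ) = (j : ℕ) then f i
    else if (j : ℕ) = (i : ℕ) + 1 then u i
    else if (i : ℕ) = (j : ℕ) + 1 then l j
    else 0

noncomputable def triDet (f u l : ℕ → ℂ) : ℕ → ℂ
  | 0 => 1
  | 1 => f 0
  | (k+2) => f (k+1) * triDet f u l (k+1) - u k * l k * triDet f u l k

lemma triMat_eval (f u l : ℕ → ℂ) {n : ℕ} (i j : Fin n) (pi pj : ℕ)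
    (hi : (i : ℕ) = pi) (hj : (j : ℕ) = pj) :
    triMat f u l n i j =
      if pi = pj then f pi else if pj = pi + 1 then u pi
      else if pi = pj + 1 then l pj else 0 := by
  subst hi; subst hj; rfl

lemma val_succAbove {n : ℕ} (p : Fin (n+1)) (i : Fin n) :
    ((p.succAbove i) : ℕ) = if (i : ℕ) < (p : ℕ) then (i : ℕ) else (i : ℕ) + 1 := by
  rcases lt_or_ge (Fin.castSucc i) p with h | h
  · rw [Fin.succAbove_of_castSucc_lt _ _ h, if_pos (by simpa [Fin.lt_def] using h)]
    simp
  · rw [Fin.succAbove_of_le_castSucc _ _ h,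
      if_neg (by simpa [not_lt, Fin.le_def] using h)]
    simp

lemma triMat_det (f u l : ℕ → ℂ) (n : ℕ) : (triMat f u l n).det = triDet f u l n := by
  have key : ∀ m, (triMat f u l m).det = triDet f u l m ∧
      (triMat f u l (m+1)).det = triDet f u l (m+1) := by
    intro m
    induction m with
    | zero =>
      constructor
      · simp [triDet, Matrix.det_fin_zero]
      · rw [show (0+1) = 1 from rfl, Matrix.det_fin_one]
        simp [triMat, triDet]
    | succ k ih =>
      refine ⟨ih.2, ?_⟩
      set M := triMat f u l (k+1+1) with hM
      have hrow : ∀ x : Fin (k+1), (((Fin.last (k+1)).succAbove x) : ℕ) = (x : ℕ) := by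
        intro x
        rw [val_succAbove, if_pos (by have := x.isLt; simp only [Fin.val_last]; omega)]
      have hcolK : ∀ x : Fin (k+1), ((((Fin.last k).castSucc).succAbove x) : ℕ)
          = if (x : ℕ) < k then (x : ℕ) else (x : ℕ) + 1 := by
        intro x
        rw [val_succAbove]
        simp [Fin.val_last]
      have hsub1 : M.submatrix (Fin.last (k+1)).succAbove (Fin.last (k+1)).succAbove
          = triMat f u l (k+1) := by
        ext i j
        rw [Matrix.submatrix_apply, hM,
          triMat_eval f u l _ _ (i : ℕ) (j : ℕ) (hrow i) (hrow j),
          triMat_eval f u l i j (i : ℕ) (j : ℕ) rfl rfl]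
      have hNdet : (M.submatrix (Fin.last (k+1)).succAbove
            ((Fin.last k).castSucc).succAbove).det = u k * triDet f u l k := by
        set N := M.submatrix (Fin.last (k+1)).succAbove
            ((Fin.last k).castSucc).succAbove with hN
        have hcol_last : ((((Fin.last k).castSucc).succAbove (Fin.last k)) : ℕ) = k + 1 := by
          rw [hcolK]; simp
        have hsub2 : N.submatrix (Fin.last k).succAbove (Fin.last k).succAbove
            = triMat f u l k := by
          ext i j
          have hri : (((Fin.last (k+1)).succAbove ((Fin.last k).succAbove i)) : ℕ)
              = (i : ℕ) := by
            rw [hrow, val_succAbove, if_pos (by simp [Fin.val_last])]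
          have hcj : ((((Fin.last k).castSucc).succAbove ((Fin.last k).succAbove j)) : ℕ)
              = (j : ℕ) := by
            have hj : (((Fin.last k).succAbove j) : ℕ) = (j : ℕ) := by
              rw [val_succAbove, if_pos (by simp [Fin.val_last])]
            rw [hcolK, hj, if_pos j.isLt]
          rw [hN, Matrix.submatrix_apply, Matrix.submatrix_apply, hM,
            triMat_eval f u l _ _ (i : ℕ) (j : ℕ) hri hcj,
            triMat_eval f u l i j (i : ℕ) (j : ℕ) rfl rfl]
        rw [Matrix.det_succ_column N (Fin.last k), Fin.sum_univ_castSucc]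
        have hzero : ∀ i : Fin k, ((-1 : ℂ)) ^ ((i.castSucc : ℕ) + (Fin.last k : ℕ)) *
            N (i.castSucc) (Fin.last k) *
            (N.submatrix (i.castSucc).succAbove (Fin.last k).succAbove).det = 0 := by
          intro i
          have hi := i.isLt
          have hentry : N (i.castSucc) (Fin.last k) = 0 := by
            rw [hN, Matrix.submatrix_apply, hM,
              triMat_eval f u l _ _ (i : ℕ) (k+1) (by rw [hrow]; simp) hcol_last,
              if_neg (by omega), if_neg (by omega), if_neg (by omega)]
          rw [hentry]; ring
        rw [Finset.sum_eq_zero (fun i _ => hzero i), zero_add]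
        have hentry : N (Fin.last k) (Fin.last k) = u k := by
          rw [hN, Matrix.submatrix_apply, hM,
            triMat_eval f u l _ _ k (k+1) (by rw [hrow]; simp) hcol_last,
            if_neg (by omega), if_pos rfl]
        rw [hentry, hsub2, ih.1]
        have hs : ((-1 : ℂ)) ^ ((Fin.last k : ℕ) + (Fin.last k : ℕ)) = 1 :=
          Even.neg_one_pow ⟨(Fin.last k : ℕ), by ring⟩
        rw [hs]; ring
      rw [Matrix.det_succ_row M (Fin.last (k+1)), Fin.sum_univ_castSucc,
        Fin.sum_univ_castSucc]
      have hzero : ∀ j : Fin k, ((-1 : ℂ)) ^ ((Fin.last (k+1) : ℕ) + ((j.castSucc.castSucc) : ℕ)) *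
          M (Fin.last (k+1)) (j.castSucc.castSucc) *
          (M.submatrix (Fin.last (k+1)).succAbove (j.castSucc.castSucc).succAbove).det = 0 := by
        intro j
        have hj := j.isLt
        have hentry : M (Fin.last (k+1)) (j.castSucc.castSucc) = 0 := by
          rw [hM, triMat_eval f u l _ _ (k+1) (j : ℕ) (by simp) (by simp),
            if_neg (by omega), if_neg (by omega), if_neg (by omega)]
        rw [hentry]; ring
      rw [Finset.sum_eq_zero (fun j _ => hzero j), zero_add]
      have hentry1 : M (Fin.last (k+1)) ((Fin.last k).castSucc) = l k := by
        rw [hM, triMat_eval f u l _ _ (k+1) k (by simp) (by simp),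
          if_neg (by omega), if_neg (by omega), if_pos rfl]
      have hentry2 : M (Fin.last (k+1)) (Fin.last (k+1)) = f (k+1) := by
        rw [hM, triMat_eval f u l _ _ (k+1) (k+1) (by simp) (by simp), if_pos rfl]
      rw [hentry1, hentry2, hsub1, ih.2, hNdet]
      have hs1 : ((-1 : ℂ)) ^ ((Fin.last (k+1) : ℕ) + (((Fin.last k).castSucc) : ℕ)) = -1 :=
        Odd.neg_one_pow ⟨k, by simp [Fin.val_last]; ring⟩
      have hs2 : ((-1 : ℂ)) ^ ((Fin.last (k+1) : ℕ) + (Fin.last (k+1) : ℕ)) = 1 :=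
        Even.neg_one_pow ⟨k+1, by simp [Fin.val_last]⟩
      rw [hs1, hs2]
      show _ = triDet f u l (k+2)
      rw [show triDet f u l (k+2) = f (k+1) * triDet f u l (k+1)
        - u k * l k * triDet f u l k from rfl]
      ring
  exact (key n).1

/-- Determinant of the Deligne–Mostow Gram matrix: for weights μ_i = a_i/d ∈ (0,1)
    with Σμ_i = 2 and α_i = exp(-2πi·a_i/d), the tridiagonal (skew-Hermitian) Gram
    matrix H (diagonal (1-α_iα_{i+1})/((1-α_i)(1-α_{i+1})), super-diagonal
    1/(α_{i+1}-1), sub-diagonal the negated conjugate) satisfies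
    det H = u / Π_i (1-α_i) with u = w·conj(w) a norm from K = ℚ(ζ_d). -/
theorem stmt5 (n d : ℕ) (hd : 0 < d) (a : Fin (n+3) → ℕ)
    (ha : ∀ i, 0 < a i ∧ a i < d) (hsum : ∑ i, a i = 2 * d)
    (α : Fin (n+3) → ℂ)
    (hα : ∀ i, α i = Complex.exp (-(2 * Real.pi * Complex.I) * (a i : ℂ) / (d : ℂ)))
    (H : Matrix (Fin (n+1)) (Fin (n+1)) ℂ)
    (hH : ∀ i j : Fin (n+1),
      H i j =
        if (i : ℕ) = (j : ℕ) then
          (1 - α (Fin.castLE (by omega) i) * α (Fin.castLE (by omega) i.succ)) /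
            ((1 - α (Fin.castLE (by omega) i)) * (1 - α (Fin.castLE (by omega) i.succ)))
        else if (j : ℕ) = (i : ℕ) + 1 then
          1 / (α (Fin.castLE (by omega) j) - 1)
        else if (i : ℕ) = (j : ℕ) + 1 then
          -(starRingEnd ℂ) (1 / (α (Fin.castLE (by omega) i) - 1))
        else 0) :
    ∃ w : ℂ,
      w ∈ IntermediateField.adjoin ℚ
          ({Complex.exp (2 * Real.pi * Complex.I / (d : ℂ))} : Set ℂ) ∧
      w ≠ 0 ∧
      H.det * ∏ i, (1 - α i) = w * (starRingEnd ℂ) w := by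
  have hdC : (d : ℂ) ≠ 0 := Nat.cast_ne_zero.mpr hd.ne'
  set A : ℕ → ℂ := fun i => if h : i < n+3 then α ⟨i, h⟩ else 1 with hAdef
  have hAα : ∀ (j : ℕ) (h : j < n+3), A j = α ⟨j, h⟩ := fun j h => dif_pos h
  have hAcast : ∀ i : Fin (n+3), A (i : ℕ) = α i := fun i => by
    rw [hAα (i : ℕ) i.isLt, Fin.eta]
  have hexp : ∀ (j : ℕ) (h : j < n+3),
      A j = Complex.exp (-(2 * Real.pi * Complex.I) * ((a ⟨j, h⟩ : ℕ) : ℂ) / (d : ℂ)) :=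
    fun j h => (hAα j h).trans (hα _)
  have h2piI : (2 * (Real.pi : ℂ) * Complex.I) ≠ 0 := by
    simp [Real.pi_ne_zero, Complex.I_ne_zero, Complex.ofReal_ne_zero]
  have hA0 : ∀ j : ℕ, j < n+3 → A j ≠ 0 := fun j h => by
    rw [hexp j h]; exact Complex.exp_ne_zero _
  have hA1 : ∀ j : ℕ, j < n+3 → A j ≠ 1 := by
    intro j h hone
    rw [hexp j h, Complex.exp_eq_one_iff] at hone
    obtain ⟨m, hm⟩ := hone
    have ha1 := (ha ⟨j, h⟩).1
    have ha2 := (ha ⟨j, h⟩).2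
    set aj := a ⟨j, h⟩ with haj
    have hC : ((aj : ℂ) + m * d) * (2 * (Real.pi : ℂ) * Complex.I) = 0 := by
      field_simp at hm
      linear_combination (-(2 * (Real.pi : ℂ) * Complex.I)) * hm
    have hC2 : ((aj : ℂ) + m * d) = 0 := by
      rcases mul_eq_zero.mp hC with h' | h'
      · exact h'
      · exact absurd h' h2piI
    have hZ : (aj : ℤ) + m * d = 0 := by exact_mod_cast hC2
    rcases le_or_gt 0 m with hm0 | hm0
    · nlinarith [mul_nonneg hm0 (show (0:ℤ) ≤ d by omega)]
    · have h1m : (1 : ℤ) ≤ -m := by omega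
      nlinarith [mul_le_mul_of_nonneg_right h1m (show (0:ℤ) ≤ d by omega)]
  have hconjA : ∀ j : ℕ, j < n+3 → (starRingEnd ℂ) (A j) = (A j)⁻¹ := by
    intro j h
    rw [hexp j h, ← Complex.exp_conj, ← Complex.exp_neg]
    congr 1
    simp only [map_div₀, _root_.map_mul, map_neg, Complex.conj_I, Complex.conj_ofReal,
      Complex.conj_natCast, map_ofNat]
    ring
  -- the tridiagonal data
  set f : ℕ → ℂ := fun i => (1 - A i * A (i+1)) / ((1 - A i) * (1 - A (i+1))) with hfdef
  set u : ℕ → ℂ := fun i => 1 / (A (i+1) - 1) with hudef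
  set l : ℕ → ℂ := fun i => -(starRingEnd ℂ) (1 / (A (i+1) - 1)) with hldef
  have hHtri : H = triMat f u l (n+1) := by
    ext i j
    rw [hH i j]
    simp only [triMat, Matrix.of_apply]
    have hc1 : ∀ x : Fin (n+1), A (x : ℕ) = α (Fin.castLE (by omega) x) :=
      fun x => hAcast (Fin.castLE (by omega) x)
    split_ifs with h1 h2 h3
    · simp only [hfdef]
      rw [show A ((i : ℕ) + 1) = α (Fin.castLE (by omega) i.succ) from
        hAcast (Fin.castLE (by omega) i.succ), hc1 i]
    · simp only [hudef]
      rw [show A ((i : ℕ) + 1) = α (Fin.castLE (by omega) j) by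
        rw [← h2]; exact hc1 j]
    · simp only [hldef]
      rw [show A ((j : ℕ) + 1) = α (Fin.castLE (by omega) i) by
        rw [← h3]; exact hc1 i]
    · rfl
  -- closed form for the principal minors
  have main : ∀ k : ℕ,
      (k ≤ n+2 → triDet f u l k * ∏ i ∈ Finset.range (k+1), (1 - A i)
          = 1 - ∏ i ∈ Finset.range (k+1), A i) ∧
      (k+1 ≤ n+2 → triDet f u l (k+1) * ∏ i ∈ Finset.range (k+2), (1 - A i)
          = 1 - ∏ i ∈ Finset.range (k+2), A i) := by
    intro k
    induction k with
    | zero =>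
      constructor
      · intro _
        simp [triDet]
      · intro _
        have h0 : (1 : ℂ) - A 0 ≠ 0 := sub_ne_zero.mpr (Ne.symm (hA1 0 (by omega)))
        have h1 : (1 : ℂ) - A 1 ≠ 0 := sub_ne_zero.mpr (Ne.symm (hA1 1 (by omega)))
        show f 0 * _ = _
        simp only [Finset.prod_range_succ, Finset.prod_range_zero, one_mul, hfdef]
        field_simp
    | succ k ihk =>
      refine ⟨ihk.2, ?_⟩
      intro hk
      have e1 := ihk.2 (by omega)
      have e0 := ihk.1 (by omega)
      have hx0 : A (k+1) ≠ 0 := hA0 _ (by omega)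
      have hx1 : (1 : ℂ) - A (k+1) ≠ 0 := sub_ne_zero.mpr (Ne.symm (hA1 _ (by omega)))
      have hy1 : (1 : ℂ) - A (k+2) ≠ 0 := sub_ne_zero.mpr (Ne.symm (hA1 _ (by omega)))
      have hx1' : A (k+1) - 1 ≠ 0 := sub_ne_zero.mpr (hA1 _ (by omega))
      have hxinv : (A (k+1))⁻¹ - 1 ≠ 0 := by
        rw [sub_ne_zero]
        intro hh
        exact hA1 (k+1) (by omega) (by rw [← inv_inv (A (k+1)), hh, inv_one])
      have hP1 : (∏ i ∈ Finset.range (k+1), (1 - A i)) ≠ 0 :=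
        Finset.prod_ne_zero_iff.mpr fun i hi =>
          sub_ne_zero.mpr (Ne.symm (hA1 i (by
            have := Finset.mem_range.mp hi; omega)))
      have hl : l k = -((A (k+1))⁻¹ - 1)⁻¹ := by
        simp only [hldef, one_div, map_neg, map_inv₀, map_sub, _root_.map_one,
          hconjA (k+1) (by omega)]
      have hu : u k = (A (k+1) - 1)⁻¹ := by simp only [hudef, one_div]
      have hT1 : triDet f u l (k+1) =
          (1 - ∏ i ∈ Finset.range (k+2), A i) / ∏ i ∈ Finset.range (k+2), (1 - A i) := by
        rw [eq_div_iff (by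
          rw [Finset.prod_range_succ]; exact mul_ne_zero hP1 hx1)]
        exact e1
      have hT0 : triDet f u l k =
          (1 - ∏ i ∈ Finset.range (k+1), A i) / ∏ i ∈ Finset.range (k+1), (1 - A i) := by
        rw [eq_div_iff hP1]; exact e0
      rw [show triDet f u l (k+2) = f (k+1) * triDet f u l (k+1)
        - u k * l k * triDet f u l k from rfl, hT1, hT0, hl, hu]
      simp only [hfdef]
      rw [Finset.prod_range_succ (fun i => 1 - A i) (k+2),
        Finset.prod_range_succ (fun i => 1 - A i) (k+1),
        Finset.prod_range_succ (fun i => A i) (k+2),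
        Finset.prod_range_succ (fun i => A i) (k+1)]
      field_simp
      ring
  -- global product of the α's
  have hprodall : ∏ i : Fin (n+3), α i = 1 := by
    have step1 : ∏ i : Fin (n+3), α i
        = Complex.exp (∑ i : Fin (n+3), -(2 * (Real.pi : ℂ) * Complex.I) * (a i : ℂ) / d) := by
      rw [Complex.exp_sum]
      exact Finset.prod_congr rfl fun i _ => hα i
    rw [step1]
    have step2 : ∑ i : Fin (n+3), -(2 * (Real.pi : ℂ) * Complex.I) * (a i : ℂ) / d
        = ((-2 : ℤ) : ℂ) * (2 * (Real.pi : ℂ) * Complex.I) := by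
      rw [← Finset.sum_div, ← Finset.mul_sum]
      have : ∑ i : Fin (n+3), (a i : ℂ) = ((2 * d : ℕ) : ℂ) := by
        rw [← hsum]; push_cast; ring
      rw [this]
      push_cast
      field_simp
    rw [step2, Complex.exp_int_mul_two_pi_mul_I]
  have hQ : ∏ i ∈ Finset.range (n+2), A i = (A (n+2))⁻¹ := by
    apply eq_inv_of_mul_eq_one_left
    rw [← Finset.prod_range_succ]
    rw [show (∏ i ∈ Finset.range (n+3), A i) = ∏ i : Fin (n+3), α i by
      rw [← Fin.prod_univ_eq_prod_range]
      exact Finset.prod_congr rfl fun i _ => hAcast i]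
    exact hprodall
  -- the witness
  refine ⟨1 - A (n+2), ?_, ?_, ?_⟩
  · have hζ : Complex.exp (2 * Real.pi * Complex.I / (d : ℂ)) ∈
        IntermediateField.adjoin ℚ
          ({Complex.exp (2 * Real.pi * Complex.I / (d : ℂ))} : Set ℂ) :=
      IntermediateField.subset_adjoin ℚ _ rfl
    have hApow : A (n+2) = (Complex.exp (2 * Real.pi * Complex.I / (d : ℂ))
        ^ (a ⟨n+2, by omega⟩ : ℕ))⁻¹ := by
      rw [hexp (n+2) (by omega), ← Complex.exp_nat_mul, ← Complex.exp_neg]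
      congr 1
      ring
    rw [hApow]
    exact sub_mem (one_mem _) (inv_mem (pow_mem hζ _))
  · exact sub_ne_zero.mpr (Ne.symm (hA1 (n+2) (by omega)))
  · have hdet : H.det = triDet f u l (n+1) := by
      rw [hHtri]
      -- use the tridiagonal determinant lemma proved separately
      exact triMat_det f u l (n+1)
    rw [hdet]
    rw [show (∏ i : Fin (n+3), (1 - α i)) = ∏ i ∈ Finset.range (n+3), (1 - A i) by
      rw [← Fin.prod_univ_eq_prod_range]
      exact Finset.prod_congr rfl fun i _ => by rw [hAcast i]]
    rw [Finset.prod_range_succ, ← mul_assoc, (main (n+1)).1 (by omega), hQ]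
    rw [map_sub, _root_.map_one, hconjA (n+2) (by omega)]
    ring
end

section
/- Let H be the 2×2 skew-Hermitian matrix with entries a = (1-α_1α_2)/((1-α_1)(1-α_2)) and c = (1-α_2α_3)/((1-α_2)(1-α_3)) on the diagonal, b = 1/(α_2-1) in position (1,2) and -\bar{b} in position (2,1), where α_i = e^{-2πiμ_i} with μ_i ∈ (0,1) rational and |α_i| = 1. Then after the change of basis replacing the second basis vector γ_2 by γ̂_2 = ((α_2-α_1α_2)/(1-α_1α_2))γ_1 + γ_2 (assuming α_1α_2 ≠ 1), the form becomes diagonal with entries a and (1-α_1α_2α_3)/((1-α_1α_2)(1-α_3)). -/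
open Matrix

/-- Merging two weights (2×2 case): for unit complex numbers α₁, α₂, α₃, each ≠ 1,
    with α₁α₂ ≠ 1, the change of basis γ̂₂ = ((α₂-α₁α₂)/(1-α₁α₂))γ₁ + γ₂
    diagonalizes the skew-Hermitian Gram matrix
    H = !![a, b; -conj b, c] into !![a, 0; 0, (1-α₁α₂α₃)/((1-α₁α₂)(1-α₃))]. -/
theorem stmt7 (α₁ α₂ α₃ : ℂ)
    (habs1 : ‖α₁‖ = 1) (habs2 : ‖α₂‖ = 1)
    (habs3 : ‖α₃‖ = 1)
    (h1 : α₁ ≠ 1) (h2 : α₂ ≠ 1) (h3 : α₃ ≠ 1) (h12 : α₁ * α₂ ≠ 1)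
    (a b c t : ℂ)
    (ha : a = (1 - α₁ * α₂) / ((1 - α₁) * (1 - α₂)))
    (hc : c = (1 - α₂ * α₃) / ((1 - α₂) * (1 - α₃)))
    (hb : b = 1 / (α₂ - 1))
    (ht : t = (α₂ - α₁ * α₂) / (1 - α₁ * α₂))
    (H P : Matrix (Fin 2) (Fin 2) ℂ)
    (hH : H = !![a, b; -(starRingEnd ℂ) b, c])
    (hP : P = !![1, 0; t, 1]) :
    P * H * Pᴴ = !![a, 0; 0, (1 - α₁ * α₂ * α₃) / ((1 - α₁ * α₂) * (1 - α₃))] := by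
  have hz1 : α₁ ≠ 0 := by intro h; simp [h] at habs1
  have hz2 : α₂ ≠ 0 := by intro h; simp [h] at habs2
  have hz3 : α₃ ≠ 0 := by intro h; simp [h] at habs3
  have hcon : ∀ z : ℂ, ‖z‖ = 1 → (starRingEnd ℂ) z = z⁻¹ := by
    intro z hz
    refine eq_inv_of_mul_eq_one_left ?_
    rw [mul_comm, Complex.mul_conj]
    norm_cast
    simp [Complex.normSq_eq_norm_sq, hz]
  have hc1 := hcon α₁ habs1
  have hc2 := hcon α₂ habs2
  have hc3 := hcon α₃ habs3
  have d1 : (1 : ℂ) - α₁ ≠ 0 := sub_ne_zero.mpr (fun h => h1 h.symm)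
  have d2 : (1 : ℂ) - α₂ ≠ 0 := sub_ne_zero.mpr (fun h => h2 h.symm)
  have d2' : α₂ - 1 ≠ 0 := sub_ne_zero.mpr h2
  have d3 : (1 : ℂ) - α₃ ≠ 0 := sub_ne_zero.mpr (fun h => h3 h.symm)
  have d12 : (1 : ℂ) - α₁ * α₂ ≠ 0 := sub_ne_zero.mpr (fun h => h12 h.symm)
  have d2i : α₂⁻¹ - 1 ≠ 0 := by
    intro h
    apply d2'
    have := sub_eq_zero.mp h
    field_simp at this
    rw [this]; ring
  have d12i : (1 : ℂ) - (α₁ * α₂)⁻¹ ≠ 0 := by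
    intro h
    apply d12
    have := sub_eq_zero.mp h
    rw [eq_comm, inv_eq_one_div, div_eq_iff (mul_ne_zero hz1 hz2), one_mul] at this
    rw [← this]; ring
  have d12'' : α₁ * α₂ - 1 ≠ 0 := sub_ne_zero.mpr h12
  have hconjt : (starRingEnd ℂ) t = (α₁ - 1) / (α₁ * α₂ - 1) := by
    rw [ht, map_div₀, map_sub, map_sub, _root_.map_mul, _root_.map_one, hc1, hc2]
    rw [div_eq_div_iff (by rw [← mul_inv]; exact d12i) d12'']
    field_simp
  have hconjb : (starRingEnd ℂ) b = α₂ / (1 - α₂) := by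
    rw [hb, map_div₀, map_sub, _root_.map_one, hc2]
    rw [div_eq_div_iff d2i d2]
    field_simp
  have e1 : a * (starRingEnd ℂ) t + b = 0 := by
    rw [ha, hb, hconjt, div_mul_div_comm, add_eq_zero_iff_eq_neg, ← neg_div,
      div_eq_div_iff (mul_ne_zero (mul_ne_zero d1 d2) d12'') d2']
    ring
  have e2 : t * a + -(starRingEnd ℂ) b = 0 := by
    rw [ha, ht, hconjb, div_mul_div_comm, add_neg_eq_zero,
      div_eq_div_iff (mul_ne_zero d12 (mul_ne_zero d1 d2)) d2]
    ring
  have e3 : t * b + c = (1 - α₁ * α₂ * α₃) / ((1 - α₁ * α₂) * (1 - α₃)) := by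
    rw [ht, hb, hc, div_mul_div_comm, div_add_div _ _ (mul_ne_zero d12 d2')
      (mul_ne_zero d2 d3), div_eq_div_iff (mul_ne_zero (mul_ne_zero d12 d2') (mul_ne_zero d2 d3)) (mul_ne_zero d12 d3)]
    ring
  subst hH hP
  ext i j
  fin_cases i <;> fin_cases j <;>
    simp [Matrix.mul_apply, Fin.sum_univ_two, Matrix.conjTranspose_apply]
  · linear_combination e1
  · linear_combination e2
  · linear_combination (starRingEnd ℂ) t * e2 + e3
end
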